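/- Let H := {(x,y) ∈ ℝ² : |x| + |y| ≤ 1} and, for each even integer p ≥ 2, let H^p := {(x,y) ∈ ℝ² : |x - t_p| + |y| ≤ l_p/2} with t_p, l_p as in the Hyperbrot characterization. Then the Hausdorff distance h(H, H^{2n}) tends to 0 as n → ∞. -/

import Mathlib

open Metric Real Filter

lemma dist_le_taxi (v w : EuclideanSpace ℝ (Fin 2)) :
    dist v w ≤ |v 0 - w 0| + |v 1 - w 1| := by
  rw [EuclideanSpace.dist_eq, Fin.sum_univ_two, Real.dist_eq, Real.dist_eq]
  have h0 := abs_nonneg (v 0 - w 0)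
  have h1 := abs_nonneg (v 1 - w 1)
  calc Real.sqrt (|v 0 - w 0| ^ 2 + |v 1 - w 1| ^ 2)
      ≤ Real.sqrt ((|v 0 - w 0| + |v 1 - w 1|) ^ 2) := by
        apply Real.sqrt_le_sqrt; nlinarith
    _ = |v 0 - w 0| + |v 1 - w 1| := Real.sqrt_sq (by positivity)

lemma diamond_hd (t r : ℝ) (hr : 0 < r) :
    Metric.hausdorffDist {v : EuclideanSpace ℝ (Fin 2) | |v 0| + |v 1| ≤ 1}
      {v : EuclideanSpace ℝ (Fin 2) | |v 0 - t| + |v 1| ≤ r} ≤ |t| + |1 - r| := by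
  apply Metric.hausdorffDist_le_of_infDist (by positivity)
  · -- points of D(0,1) are close to D(t,r)
    intro x hx
    simp only [Set.mem_setOf_eq] at hx
    rcases le_total r 1 with h | h
    · set w : EuclideanSpace ℝ (Fin 2) := WithLp.toLp 2 ![t + r * x 0, r * x 1] with hw
      have hw0 : w 0 = t + r * x 0 := rfl
      have hw1 : w 1 = r * x 1 := rfl
      have hmem : w ∈ {v : EuclideanSpace ℝ (Fin 2) | |v 0 - t| + |v 1| ≤ r} := by
        simp only [Set.mem_setOf_eq, hw0, hw1]
        have : t + r * x 0 - t = r * x 0 := by ring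
        rw [this, abs_mul, abs_mul, abs_of_pos hr]
        nlinarith [abs_nonneg (x 0), abs_nonneg (x 1)]
      refine (Metric.infDist_le_dist_of_mem hmem).trans ?_
      refine (dist_le_taxi x w).trans ?_
      rw [hw0, hw1]
      have e0 : x 0 - (t + r * x 0) = (1 - r) * x 0 - t := by ring
      have e1 : x 1 - r * x 1 = (1 - r) * x 1 := by ring
      rw [e0, e1]
      have b0 : |(1 - r) * x 0 - t| ≤ (1 - r) * |x 0| + |t| := by
        refine (abs_sub _ _).trans ?_
        rw [abs_mul, abs_of_nonneg (by linarith)]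
      have b1 : |(1 - r) * x 1| = (1 - r) * |x 1| := by
        rw [abs_mul, abs_of_nonneg (by linarith)]
      rw [b1]
      have h1r : |1 - r| = 1 - r := abs_of_nonneg (by linarith)
      rw [h1r]
      nlinarith [abs_nonneg (x 0), abs_nonneg (x 1), abs_nonneg t]
    · set w : EuclideanSpace ℝ (Fin 2) := WithLp.toLp 2 ![x 0 + t, x 1] with hw
      have hw0 : w 0 = x 0 + t := rfl
      have hw1 : w 1 = x 1 := rfl
      have hmem : w ∈ {v : EuclideanSpace ℝ (Fin 2) | |v 0 - t| + |v 1| ≤ r} := by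
        simp only [Set.mem_setOf_eq, hw0, hw1]
        have : x 0 + t - t = x 0 := by ring
        rw [this]; linarith
      refine (Metric.infDist_le_dist_of_mem hmem).trans ?_
      refine (dist_le_taxi x w).trans ?_
      rw [hw0, hw1]
      simp only [sub_add_cancel_left, sub_self, abs_zero, abs_neg]
      have := abs_nonneg (1 - r)
      linarith
  · intro x hx
    simp only [Set.mem_setOf_eq] at hx
    rcases le_total r 1 with h | h
    · set w : EuclideanSpace ℝ (Fin 2) := WithLp.toLp 2 ![x 0 - t, x 1] with hw
      have hw0 : w 0 = x 0 - t := rfl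
      have hw1 : w 1 = x 1 := rfl
      have hmem : w ∈ {v : EuclideanSpace ℝ (Fin 2) | |v 0| + |v 1| ≤ 1} := by
        simp only [Set.mem_setOf_eq, hw0, hw1]; linarith
      refine (Metric.infDist_le_dist_of_mem hmem).trans ?_
      refine (dist_le_taxi x w).trans ?_
      rw [hw0, hw1]
      simp only [sub_sub_cancel, sub_self, abs_zero]
      have := abs_nonneg (1 - r)
      linarith
    · set w : EuclideanSpace ℝ (Fin 2) := WithLp.toLp 2 ![(x 0 - t) / r, x 1 / r] with hw
      have hw0 : w 0 = (x 0 - t) / r := rfl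
      have hw1 : w 1 = x 1 / r := rfl
      have hmem : w ∈ {v : EuclideanSpace ℝ (Fin 2) | |v 0| + |v 1| ≤ 1} := by
        simp only [Set.mem_setOf_eq, hw0, hw1, abs_div, abs_of_pos hr]
        rw [← add_div, div_le_one hr]; exact hx
      refine (Metric.infDist_le_dist_of_mem hmem).trans ?_
      refine (dist_le_taxi x w).trans ?_
      rw [hw0, hw1]
      have e0 : x 0 - (x 0 - t) / r = ((r - 1) * (x 0 - t) + t * r) / r := by
        field_simp; ring
      have e1 : x 1 - x 1 / r = ((r - 1) * x 1) / r := by field_simp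
      rw [e0, e1, abs_div, abs_div, abs_of_pos hr]
      have b0 : |(r - 1) * (x 0 - t) + t * r| ≤ (r - 1) * |x 0 - t| + |t| * r := by
        refine (abs_add_le _ _).trans ?_
        rw [abs_mul, abs_mul, abs_of_nonneg (by linarith), abs_of_pos hr]
      have b1 : |(r - 1) * x 1| = (r - 1) * |x 1| := by
        rw [abs_mul, abs_of_nonneg (by linarith)]
      rw [b1]
      have h1r : |1 - r| = r - 1 := by rw [abs_sub_comm]; exact abs_of_nonneg (by linarith)
      rw [h1r, ← add_div, div_le_iff₀ hr]
      nlinarith [abs_nonneg (x 0 - t), abs_nonneg (x 1), abs_nonneg t]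

open Metric Real Filter

lemma rpow_lim (c : ℝ) (hc : 0 < c) :
    Tendsto (fun y : ℝ => (c * y) ^ ((1:ℝ) / (y - 1))) atTop (nhds 1) := by
  have t1 : Tendsto (fun y : ℝ => Real.log c / (y - 1)) atTop (nhds 0) :=
    tendsto_const_nhds.div_atTop (tendsto_atTop_add_const_right _ (-1) tendsto_id)
  have t2 : Tendsto (fun y : ℝ => Real.log y / y) atTop (nhds 0) :=
    Real.isLittleO_log_id_atTop.tendsto_div_nhds_zero
  have t3 : Tendsto (fun y : ℝ => y / (y - 1)) atTop (nhds 1) := by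
    have h : Tendsto (fun y : ℝ => 1 + 1 / (y - 1)) atTop (nhds (1 + 0)) :=
      tendsto_const_nhds.add
        (tendsto_const_nhds.div_atTop (tendsto_atTop_add_const_right _ (-1) tendsto_id))
    rw [add_zero] at h
    refine h.congr' ?_
    filter_upwards [eventually_gt_atTop (1:ℝ)] with y hy
    have : y - 1 ≠ 0 := by linarith
    field_simp
    ring
  have hexp : Tendsto (fun y : ℝ => Real.log (c * y) * ((1:ℝ) / (y - 1))) atTop (nhds 0) := by
    have h : Tendsto (fun y : ℝ => Real.log c / (y - 1) + (Real.log y / y) * (y / (y - 1)))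
        atTop (nhds (0 + 0 * 1)) := t1.add (t2.mul t3)
    rw [zero_mul, add_zero] at h
    refine h.congr' ?_
    filter_upwards [eventually_gt_atTop (1:ℝ)] with y hy
    have hy0 : (0:ℝ) < y := by linarith
    have h1 : y - 1 ≠ 0 := by linarith
    rw [Real.log_mul (ne_of_gt hc) (ne_of_gt hy0)]
    field_simp
  have := (Real.continuous_exp.tendsto 0).comp hexp
  rw [Real.exp_zero] at this
  refine this.congr' ?_
  filter_upwards [eventually_gt_atTop (0:ℝ)] with y hy
  rw [Function.comp_apply, Real.rpow_def_of_pos (by positivity)]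

open Metric Real Filter

section aux14

noncomputable def X14 (n : ℕ) : ℝ := ((2 * n : ℕ) : ℝ)
noncomputable def A14 (n : ℕ) : ℝ := (2 * X14 n) ^ ((1:ℝ) / (X14 n - 1))
noncomputable def B14 (n : ℕ) : ℝ := (X14 n) ^ ((1:ℝ) / (X14 n - 1))
noncomputable def T14 (n : ℕ) : ℝ :=
  (-(X14 n) * (A14 n - 1) - 1) / (2 * (X14 n) ^ (X14 n / (X14 n - 1)))
noncomputable def R14 (n : ℕ) : ℝ :=
  ((X14 n) * (A14 n + 1) - 1) / (X14 n) ^ (X14 n / (X14 n - 1)) / 2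

lemma hX14 : Tendsto X14 atTop atTop := by
  have : X14 = fun n : ℕ => 2 * (n : ℝ) := by
    funext n; show ((2 * n : ℕ) : ℝ) = 2 * (n : ℝ); push_cast; ring
  rw [this]
  exact (tendsto_natCast_atTop_atTop).const_mul_atTop two_pos

lemma hX14ge (n : ℕ) (hn : 1 ≤ n) : (2:ℝ) ≤ X14 n := by
  have : (1:ℝ) ≤ (n:ℝ) := by exact_mod_cast hn
  simp only [X14]; push_cast; linarith

lemma hA14 : Tendsto A14 atTop (nhds 1) := (rpow_lim 2 two_pos).comp hX14

lemma hB14 : Tendsto B14 atTop (nhds 1) := by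
  refine ((rpow_lim 1 one_pos).comp hX14).congr fun n => ?_
  simp [B14, Function.comp]

lemma key14 (n : ℕ) (hn : 1 ≤ n) :
    (X14 n) ^ (X14 n / (X14 n - 1)) = X14 n * B14 n := by
  have h2 := hX14ge n hn
  have hx0 : (0:ℝ) < X14 n := by linarith
  have hx1 : X14 n - 1 ≠ 0 := by intro h; nlinarith
  rw [show X14 n / (X14 n - 1) = 1 + 1 / (X14 n - 1) by field_simp; ring,
    Real.rpow_add hx0, Real.rpow_one, B14]

lemma hT14 : Tendsto T14 atTop (nhds 0) := by
  have h : Tendsto (fun n => ((1 - A14 n) - (X14 n)⁻¹) / (2 * B14 n)) atTop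
      (nhds (((1 - 1) - 0) / (2 * 1))) :=
    ((tendsto_const_nhds.sub hA14).sub hX14.inv_tendsto_atTop).div
      (tendsto_const_nhds.mul hB14) (by norm_num)
  norm_num at h
  refine h.congr' ?_
  filter_upwards [eventually_ge_atTop 1] with n hn
  have h2 := hX14ge n hn
  have hx0 : (0:ℝ) < X14 n := by linarith
  have hb : 0 < B14 n := Real.rpow_pos_of_pos hx0 _
  rw [T14, key14 n hn]
  field_simp
  ring

lemma hR14 : Tendsto R14 atTop (nhds 1) := by
  have h : Tendsto (fun n => ((A14 n + 1) - (X14 n)⁻¹) / B14 n / 2) atTop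
      (nhds (((1 + 1) - 0) / 1 / 2)) :=
    (((hA14.add tendsto_const_nhds).sub hX14.inv_tendsto_atTop).div hB14 (by norm_num)).div_const 2
  norm_num at h
  refine h.congr' ?_
  filter_upwards [eventually_ge_atTop 1] with n hn
  have h2 := hX14ge n hn
  have hx0 : (0:ℝ) < X14 n := by linarith
  have hb : 0 < B14 n := Real.rpow_pos_of_pos hx0 _
  rw [R14, key14 n hn]
  field_simp

end aux14

theorem stmt_14 :
    Filter.Tendsto
      (fun n : ℕ =>
        Metric.hausdorffDist
          {v : EuclideanSpace ℝ (Fin 2) | |v 0| + |v 1| ≤ 1}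
          {v : EuclideanSpace ℝ (Fin 2) |
            |v 0 - (-((2 * n : ℕ) : ℝ) *
                  ((2 * ((2 * n : ℕ) : ℝ)) ^ ((1 : ℝ) / (((2 * n : ℕ) : ℝ) - 1)) - 1) - 1) /
                (2 * ((2 * n : ℕ) : ℝ) ^ (((2 * n : ℕ) : ℝ) / (((2 * n : ℕ) : ℝ) - 1)))| +
              |v 1| ≤
              (((2 * n : ℕ) : ℝ) *
                    ((2 * ((2 * n : ℕ) : ℝ)) ^ ((1 : ℝ) / (((2 * n : ℕ) : ℝ) - 1)) + 1) - 1) /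
                  ((2 * n : ℕ) : ℝ) ^ (((2 * n : ℕ) : ℝ) / (((2 * n : ℕ) : ℝ) - 1)) / 2})
      Filter.atTop (nhds 0) := by
  have hset : ∀ n : ℕ,
      {v : EuclideanSpace ℝ (Fin 2) |
            |v 0 - (-((2 * n : ℕ) : ℝ) *
                  ((2 * ((2 * n : ℕ) : ℝ)) ^ ((1 : ℝ) / (((2 * n : ℕ) : ℝ) - 1)) - 1) - 1) /
                (2 * ((2 * n : ℕ) : ℝ) ^ (((2 * n : ℕ) : ℝ) / (((2 * n : ℕ) : ℝ) - 1)))| +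
              |v 1| ≤
              (((2 * n : ℕ) : ℝ) *
                    ((2 * ((2 * n : ℕ) : ℝ)) ^ ((1 : ℝ) / (((2 * n : ℕ) : ℝ) - 1)) + 1) - 1) /
                  ((2 * n : ℕ) : ℝ) ^ (((2 * n : ℕ) : ℝ) / (((2 * n : ℕ) : ℝ) - 1)) / 2}
        = {v : EuclideanSpace ℝ (Fin 2) | |v 0 - T14 n| + |v 1| ≤ R14 n} := by
    intro n; rfl
  apply squeeze_zero' (Eventually.of_forall fun n => Metric.hausdorffDist_nonneg)
    (g := fun n => |T14 n| + |1 - R14 n|)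
  · filter_upwards [hR14.eventually (eventually_gt_nhds (by norm_num : (0:ℝ) < 1))] with n hn
    rw [hset n]
    exact diamond_hd (T14 n) (R14 n) hn
  · have h : Tendsto (fun n => |T14 n| + |1 - R14 n|) atTop (nhds (|0| + |1 - 1|)) :=
      hT14.abs.add (tendsto_const_nhds.sub hR14).abs
    norm_num at h
    exact h
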